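/- For every N ∈ ℕ there exists M ∈ ℕ (namely M = N+1) such that for every K ∈ ℕ there is θ₀ ∈ (0,1) with: for all θ ∈ [θ₀, 1), n = 1, and every m ∈ ℕ, there exist k ∈ ℕ and C > 0 such that (j^K/i^k)^{1-θ}(j^N/i^n)^θ ≤ C · j^M/i^m for all i, j ∈ ℕ. (Sufficient choices: θ₀ with (1-θ₀)K + Nθ₀ ≤ M, and k with (1-θ)k + nθ ≥ m, C = 1.) -/

import Mathlib

/-- The key interpolation inequality (dual interpolation estimate for big `θ`) for the
Köthe weights `b'_{ij,N,n} = j^N/i^n` with `n = 1`: for every `N` there is `M = N+1`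
such that for every `K` there is `θ₀ ∈ (0,1)` with `(1-θ₀)K + Nθ₀ ≤ M`, and for all
`θ ∈ [θ₀,1)` and `m` there are `k` with `(1-θ)k + θ ≥ m` and `C > 0` with
`(j^K/i^k)^{1-θ}(j^N/i)^θ ≤ C·j^M/i^m` for all `i, j ≥ 1`. -/
theorem stmt10 : ∀ N : ℕ, ∃ M : ℕ, M = N + 1 ∧
    ∀ K : ℕ, ∃ θ₀ : ℝ, 0 < θ₀ ∧ θ₀ < 1 ∧ (1 - θ₀) * K + N * θ₀ ≤ M ∧
      ∀ θ : ℝ, θ₀ ≤ θ → θ < 1 → ∀ m : ℕ, ∃ k : ℕ, ∃ C : ℝ, 0 < C ∧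
        (m : ℝ) ≤ (1 - θ) * k + θ * 1 ∧
        ∀ i j : ℕ, 1 ≤ i → 1 ≤ j →
          ((j : ℝ) ^ K / (i : ℝ) ^ k) ^ (1 - θ) * ((j : ℝ) ^ N / (i : ℝ) ^ 1) ^ θ ≤
            C * (j : ℝ) ^ M / (i : ℝ) ^ m := by
  intro N
  refine ⟨N + 1, rfl, fun K => ?_⟩
  have hK2 : (0:ℝ) < (K:ℝ) + 2 := by positivity
  refine ⟨((K:ℝ) + 1) / ((K:ℝ) + 2), by positivity, ?_, ?_, ?_⟩
  · rw [div_lt_one hK2]; linarith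
  · have h1 : 1 - ((K:ℝ) + 1) / ((K:ℝ) + 2) = 1 / ((K:ℝ) + 2) := by
      field_simp
      ring
    rw [h1, div_mul_eq_mul_div, ← mul_div_assoc, ← add_div, div_le_iff₀ hK2]
    push_cast
    nlinarith [Nat.cast_nonneg (α := ℝ) N, Nat.cast_nonneg (α := ℝ) K]
  · intro θ hθ0 hθ1 m
    have hθpos : 0 < θ := lt_of_lt_of_le (by positivity) hθ0
    have h1θ : 0 < 1 - θ := by linarith
    refine ⟨⌈(m:ℝ) / (1 - θ)⌉₊, 1, one_pos, ?_, ?_⟩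
    · have hk : (m:ℝ) / (1 - θ) ≤ (⌈(m:ℝ) / (1 - θ)⌉₊ : ℝ) := Nat.le_ceil _
      have : (m:ℝ) ≤ (1 - θ) * ⌈(m:ℝ) / (1 - θ)⌉₊ := by
        rw [div_le_iff₀ h1θ] at hk; linarith
      linarith
    · intro i j hi hj
      set k := ⌈(m:ℝ) / (1 - θ)⌉₊ with hkdef
      have hx : (1:ℝ) ≤ (i:ℝ) := by exact_mod_cast hi
      have hy : (1:ℝ) ≤ (j:ℝ) := by exact_mod_cast hj
      have hxpos : (0:ℝ) < (i:ℝ) := lt_of_lt_of_le one_pos hx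
      have hypos : (0:ℝ) < (j:ℝ) := lt_of_lt_of_le one_pos hy
      have key : ∀ (a b : ℕ) (t : ℝ), 0 ≤ t →
          ((j:ℝ) ^ a / (i:ℝ) ^ b) ^ t =
            (j:ℝ) ^ ((a:ℝ) * t) / (i:ℝ) ^ ((b:ℝ) * t) := by
        intro a b t ht
        rw [Real.div_rpow (by positivity) (by positivity),
          ← Real.rpow_natCast (j:ℝ) a, ← Real.rpow_natCast (i:ℝ) b,
          ← Real.rpow_mul hypos.le, ← Real.rpow_mul hxpos.le]
      rw [key K k (1 - θ) h1θ.le, key N 1 θ hθpos.le, Nat.cast_one]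
      rw [div_mul_div_comm, ← Real.rpow_add hypos, ← Real.rpow_add hxpos]
      have hexp1 : (K:ℝ) * (1 - θ) + (N:ℝ) * θ ≤ (N + 1 : ℕ) := by
        have hθ0' : ((K:ℝ) + 1) / ((K:ℝ) + 2) ≤ θ := hθ0
        have hK1 : (K:ℝ) * (1 - θ) ≤ 1 := by
          have : 1 - θ ≤ 1 / ((K:ℝ) + 2) := by
            rw [le_div_iff₀ hK2]
            have := (div_le_iff₀ hK2).mp hθ0'
            nlinarith
          have hKnn : (0:ℝ) ≤ (K:ℝ) := Nat.cast_nonneg _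
          calc (K:ℝ) * (1 - θ) ≤ (K:ℝ) * (1 / ((K:ℝ) + 2)) :=
                mul_le_mul_of_nonneg_left this hKnn
            _ ≤ 1 := by rw [mul_one_div, div_le_one hK2]; linarith
        have hN : (N:ℝ) * θ ≤ N :=
          mul_le_of_le_one_right (Nat.cast_nonneg _) hθ1.le
        push_cast; linarith
      have hexp2 : (m:ℝ) ≤ (k:ℝ) * (1 - θ) + 1 * θ := by
        have hk : (m:ℝ) / (1 - θ) ≤ (k:ℝ) := Nat.le_ceil _
        rw [div_le_iff₀ h1θ] at hk
        nlinarith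
      have hjle : (j:ℝ) ^ ((K:ℝ) * (1 - θ) + (N:ℝ) * θ) ≤ (j:ℝ) ^ (N + 1 : ℕ) := by
        rw [← Real.rpow_natCast (j:ℝ) (N+1)]
        exact Real.rpow_le_rpow_of_exponent_le hy hexp1
      have hile : (i:ℝ) ^ m ≤ (i:ℝ) ^ ((k:ℝ) * (1 - θ) + 1 * θ) := by
        rw [← Real.rpow_natCast (i:ℝ) m]
        exact Real.rpow_le_rpow_of_exponent_le hx hexp2
      rw [one_mul ((j:ℝ) ^ (N + 1))]
      exact div_le_div₀ (by positivity) hjle (by positivity) hile
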